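/- Let J be a q×q periodic Jacobi matrix (q ≥ 3) with diagonal entries α₀,…,α_{q-1}, sub/super-diagonal entries β₀,…,β_{q-2} < 0 and corner entries β_{q-1} < 0, and let M(λ) be the associated monodromy matrix, the product of the q transfer matrices [[0,1],[-β_{i-1}/β_i, (λ-α_i)/β_i]]. Then det(J - λI) = (-1)^q · β₀β₁⋯β_{q-1} · (tr M(λ) - 2) for all λ ∈ ℝ (the Hill formula). -/

import Mathlib

noncomputable def Dd (lam : ℝ) (a b : ℕ → ℝ) : ℕ → ℕ → ℝ
  | _, 0 => 1
  | o, 1 => lam - a o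
  | o, n+2 => (lam - a o) * Dd lam a b (o+1) (n+1) - (b o)^2 * Dd lam a b (o+2) n
  termination_by _ n => n

lemma Dd_zero (lam : ℝ) (a b : ℕ → ℝ) (o : ℕ) : Dd lam a b o 0 = 1 := by rw [Dd]
lemma Dd_one (lam : ℝ) (a b : ℕ → ℝ) (o : ℕ) : Dd lam a b o 1 = lam - a o := by rw [Dd]
lemma Dd_rec (lam : ℝ) (a b : ℕ → ℝ) (o n : ℕ) :
    Dd lam a b o (n+2) = (lam - a o) * Dd lam a b (o+1) (n+1) - (b o)^2 * Dd lam a b (o+2) n := by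
  rw [Dd]

lemma Dd_rec_end (lam : ℝ) (a b : ℕ → ℝ) : ∀ n o, Dd lam a b o (n+2)
    = (lam - a (o+n+1)) * Dd lam a b o (n+1) - (b (o+n))^2 * Dd lam a b o n := by
  intro n
  induction n using Nat.strong_induction_on with
  | _ n ih =>
    match n with
    | 0 => intro o; rw [Dd_rec, Dd_one, Dd_one, Dd_zero, Dd_zero]; ring_nf
    | 1 =>
      intro o
      have h2 : ∀ p, Dd lam a b p 2 = (lam - a p)*(lam - a (p+1)) - b p ^2 := by
        intro p; rw [Dd_rec, Dd_one, Dd_zero]; ring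
      rw [Dd_rec, show (1:ℕ)+1 = 2 from rfl, h2, h2, Dd_one, Dd_one,
        show o+1+1 = o+2 from rfl]
      ring
    | (n+2) =>
      intro o
      rw [Dd_rec, ih (n+1) (by omega) (o+1), ih n (by omega) (o+2),
        show (n+1)+2 = n+3 from rfl, Dd_rec lam a b o (n+1), Dd_rec lam a b o n,
        show o+1+(n+1)+1 = o+n+2+1 from by omega, show o+1+(n+1) = o+n+2 from by omega,
        show o+2+n+1 = o+n+2+1 from by omega, show o+2+n = o+n+2 from by omega,
        show o+(n+2)+1 = o+n+2+1 from by omega, show o+(n+2) = o+n+2 from by omega]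
      ring

noncomputable def Gmat (lam : ℝ) (a b : ℕ → ℝ) (o n : ℕ) : Matrix (Fin n) (Fin n) ℝ :=
  Matrix.of fun i j =>
    if (i:ℕ) = (j:ℕ) then lam - a (o+(i:ℕ))
    else if (j:ℕ) = (i:ℕ)+1 then -b (o+(i:ℕ))
    else if (i:ℕ) = (j:ℕ)+1 then -b (o+(j:ℕ))
    else 0

lemma sAval {k : ℕ} (p : Fin (k+1)) (i : Fin k) :
    ((p.succAbove i : Fin (k+1)) : ℕ) = if (i:ℕ) < (p:ℕ) then (i:ℕ) else (i:ℕ)+1 := by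
  rw [Fin.succAbove]
  split
  · rename_i h
    rw [if_pos]
    · simp
    · simpa [Fin.lt_def] using h
  · rename_i h
    rw [if_neg]
    · simp
    · simpa [Fin.lt_def] using h

lemma GDd (lam : ℝ) (a b : ℕ → ℝ) : ∀ n o, (Gmat lam a b o n).det = Dd lam a b o n := by
  intro n
  induction n using Nat.strong_induction_on with
  | _ n ih =>
    match n with
    | 0 => intro o; rw [Matrix.det_fin_zero, Dd_zero]
    | 1 =>
      intro o
      rw [Matrix.det_fin_one, Dd_one, Gmat]
      simp
    | (n+2) =>
      intro o
      rw [Matrix.det_succ_row_zero, Fin.sum_univ_succ, Fin.sum_univ_succ]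
      have hz : ∀ j : Fin n, (-1:ℝ)^((j.succ.succ : Fin (n+2)) : ℕ) *
          Gmat lam a b o (n+2) 0 j.succ.succ *
          (Matrix.det ((Gmat lam a b o (n+2)).submatrix Fin.succ (Fin.succAbove j.succ.succ))) = 0 := by
        intro j
        have : Gmat lam a b o (n+2) 0 j.succ.succ = 0 := by
          rw [Gmat]
          simp only [Matrix.of_apply, Fin.val_succ, Fin.val_zero]
          split_ifs <;> first | rfl | omega | exact (‹False›).elim
        rw [this]; ring
      rw [Finset.sum_eq_zero fun j _ => hz j, add_zero]
      have h00 : Gmat lam a b o (n+2) 0 0 = lam - a o := by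
        rw [Gmat]; simp
      have h01 : Gmat lam a b o (n+2) 0 (Fin.succ 0) = -b o := by
        rw [Gmat]
        simp only [Matrix.of_apply, Fin.val_zero, Fin.val_succ]
        norm_num
      have hA : (Gmat lam a b o (n+2)).submatrix Fin.succ (Fin.succAbove 0) = Gmat lam a b (o+1) (n+1) := by
        rw [Fin.succAbove_zero]
        ext i j
        simp only [Matrix.submatrix_apply, Gmat, Matrix.of_apply, Fin.val_succ]
        rw [show o+((i:ℕ)+1) = o+1+(i:ℕ) from by omega, show o+((j:ℕ)+1) = o+1+(j:ℕ) from by omega]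
        split_ifs <;> first | rfl | omega
      -- second minor
      set N : Matrix (Fin (n+1)) (Fin (n+1)) ℝ :=
        (Gmat lam a b o (n+2)).submatrix Fin.succ (Fin.succAbove (Fin.succ 0)) with hN
      have hNdet : N.det = -b o * Dd lam a b (o+2) n := by
        rw [Matrix.det_succ_column_zero, Fin.sum_univ_succ]
        have hz2 : ∀ i : Fin n, (-1:ℝ)^((i.succ : Fin (n+1)) : ℕ) * N i.succ 0 *
            (N.submatrix (Fin.succAbove i.succ) Fin.succ).det = 0 := by
          intro i
          have : N i.succ 0 = 0 := by
            rw [hN]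
            simp only [Matrix.submatrix_apply, Gmat, Matrix.of_apply, Fin.val_succ, sAval,
              Fin.val_zero]
            split_ifs <;> first | rfl | omega | exact (‹False›).elim
          rw [this]; ring
        rw [Finset.sum_eq_zero fun i _ => hz2 i, add_zero]
        have hN00 : N 0 0 = -b o := by
          rw [hN]
          simp only [Matrix.submatrix_apply, Gmat, Matrix.of_apply, Fin.val_succ, sAval,
            Fin.val_zero]
          norm_num
        have hC : N.submatrix (Fin.succAbove 0) Fin.succ = Gmat lam a b (o+2) n := by
          rw [Fin.succAbove_zero, hN]
          ext i j
          have hs : (((Fin.succ 0 : Fin (n+2)).succAbove j.succ : Fin (n+2)) : ℕ) = (j:ℕ)+2 := by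
            rw [sAval]; simp
          simp only [Matrix.submatrix_apply, Gmat, Matrix.of_apply, hs, Fin.val_succ,
            Fin.val_zero]
          rw [show o+((i:ℕ)+1+1) = o+2+(i:ℕ) from by omega,
            show o+((j:ℕ)+2) = o+2+(j:ℕ) from by omega]
          split_ifs <;> first | rfl | omega | exact (‹False›).elim
        rw [hN00, hC, ih n (by omega) (o+2)]
        simp
      rw [h00, h01, hA, hNdet, ih (n+1) (by omega) (o+1), Dd_rec]
      simp only [Fin.val_zero, Fin.val_succ, pow_zero, pow_one]
      ring

section hill
variable {m : ℕ}
open Fin.NatCast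

noncomputable def Tm (lam : ℝ) (α β : Fin (m+3) → ℝ) (i : Fin (m+3)) : Matrix (Fin 2) (Fin 2) ℝ :=
  !![0, 1; -β (i-1)/β i, (lam - α i)/β i]

noncomputable def Sj (lam : ℝ) (α β : Fin (m+3) → ℝ) (j : ℕ) : Matrix (Fin 2) (Fin 2) ℝ :=
  ((List.ofFn (Tm lam α β)).drop j).reverse.prod

def aa (α : Fin (m+3) → ℝ) (n : ℕ) : ℝ := α n
def bb (β : Fin (m+3) → ℝ) (n : ℕ) : ℝ := β n
noncomputable def Bp (β : Fin (m+3) → ℝ) (o n : ℕ) : ℝ := ∏ i ∈ Finset.range n, bb β (o+i)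

lemma Bp_zero (β : Fin (m+3) → ℝ) (o : ℕ) : Bp β o 0 = 1 := by simp [Bp]

lemma Bp_cons (β : Fin (m+3) → ℝ) (o n : ℕ) : Bp β o (n+1) = bb β o * Bp β (o+1) n := by
  rw [Bp, Finset.prod_range_succ']
  rw [Nat.add_zero, mul_comm]
  congr 1
  · rw [Bp]
    refine Finset.prod_congr rfl fun k _ => ?_
    rw [show o+1+k = o+(k+1) from by omega]

lemma Bp_ne (β : Fin (m+3) → ℝ) (hβ : ∀ i, β i ≠ 0) (o n : ℕ) : Bp β o n ≠ 0 := by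
  rw [Bp]
  exact Finset.prod_ne_zero_iff.mpr fun i _ => hβ _

lemma Sstep (lam : ℝ) (α β : Fin (m+3) → ℝ) (j : ℕ) (hj : j < m+3) :
    Sj lam α β j = Sj lam α β (j+1) * Tm lam α β ↑j := by
  have hlen : j < (List.ofFn (Tm lam α β)).length := by simp; omega
  rw [Sj, List.drop_eq_getElem_cons hlen, List.reverse_cons, List.prod_append,
    List.prod_singleton, Sj, List.getElem_ofFn]
  congr 2
  have : (⟨j, hj⟩ : Fin (m+3)) = ↑j :=
    Fin.ext (by simp only [Fin.val_natCast]; exact (Nat.mod_eq_of_lt hj).symm)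
  rw [this]

lemma Slast (lam : ℝ) (α β : Fin (m+3) → ℝ) : Sj lam α β (m+3) = 1 := by
  rw [Sj, List.drop_eq_nil_of_le (le_of_eq List.length_ofFn), List.reverse_nil, List.prod_nil]

lemma hsub1 (j : ℕ) (hj : j + 1 < m+3) : (↑(j+1) : Fin (m+3)) - 1 = ↑j := by
  apply Fin.ext
  rw [Fin.sub_def]
  simp only [Fin.val_one, Fin.val_natCast, Nat.mod_eq_of_lt hj, Nat.mod_eq_of_lt (show j < m+3 by omega)]
  rw [show m+3-1+(j+1) = j + (m+3) from by omega, Nat.add_mod_right, Nat.mod_eq_of_lt (by omega)]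

lemma transfer (lam : ℝ) (α β : Fin (m+3) → ℝ) (hβ : ∀ i, β i ≠ 0) :
    ∀ d, d ≤ m+1 → Sj lam α β (m+1-d) =
      !![ -β ((↑(m+1-d) : Fin (m+3)) - 1) * Dd lam (aa α) (bb β) (m+1-d+1) d / Bp β (m+1-d) (d+1),
          Dd lam (aa α) (bb β) (m+1-d) (d+1) / Bp β (m+1-d) (d+1);
          -β ((↑(m+1-d) : Fin (m+3)) - 1) * Dd lam (aa α) (bb β) (m+1-d+1) (d+1) / Bp β (m+1-d) (d+2),
          Dd lam (aa α) (bb β) (m+1-d) (d+2) / Bp β (m+1-d) (d+2) ] := by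
  intro d
  induction d with
  | zero =>
    intro _
    rw [show m+1-0 = m+1 from rfl, Sstep lam α β (m+1) (by omega),
      Sstep lam α β (m+2) (by omega), Slast, one_mul, Tm, Tm, Matrix.mul_fin_two,
      hsub1 (m+1) (by omega)]
    have hb1 : β (↑(m+1) : Fin (m+3)) = bb β (m+1) := rfl
    have hb2 : β (↑(m+2) : Fin (m+3)) = bb β (m+2) := rfl
    have ha1 : α (↑(m+1) : Fin (m+3)) = aa α (m+1) := rfl
    have ha2 : α (↑(m+2) : Fin (m+3)) = aa α (m+2) := rfl
    have hb1ne : bb β (m+1) ≠ 0 := hβ _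
    have hb2ne : bb β (m+2) ≠ 0 := hβ _
    have hBp1 : Bp β (m+1) 1 = bb β (m+1) := by
      rw [Bp_cons, Bp_zero, mul_one]
    have hBp2 : Bp β (m+1) 2 = bb β (m+1) * bb β (m+2) := by
      rw [Bp_cons, Bp_cons, Bp_zero, mul_one]
    ext i j
    fin_cases i <;> fin_cases j <;>
      simp only [Matrix.cons_val', Matrix.cons_val_zero, Matrix.cons_val_one, Matrix.head_cons,
        Matrix.head_fin_const, Matrix.empty_val', Matrix.cons_val_fin_one, Fin.isValue,
        Fin.zero_eta, Fin.mk_one, Nat.sub_zero, Nat.zero_add, Nat.add_zero,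
        show m+1+1 = m+2 from rfl, hb1, hb2, ha1, ha2, hBp1, hBp2, Dd_zero, Dd_one, Dd_rec] <;>
      field_simp <;> ring
  | succ d ih =>
    intro hd
    have IH := ih (by omega)
    set j := m+1-(d+1) with hjdef
    have hj1 : m+1-d = j+1 := by omega
    rw [hj1] at IH
    have hjlt : j + 1 < m + 3 := by omega
    rw [Sstep lam α β j (by omega), IH, Tm, hsub1 j hjlt, Matrix.mul_fin_two]
    have hb : β (↑j : Fin (m+3)) = bb β j := rfl
    have ha : α (↑j : Fin (m+3)) = aa α j := rfl
    have hbne : bb β j ≠ 0 := hβ _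
    have hB1 : Bp β (j+1) (d+1) ≠ 0 := Bp_ne β hβ _ _
    have hB2 : Bp β (j+1) (d+2) ≠ 0 := Bp_ne β hβ _ _
    have hBc1 : Bp β j (d+2) = bb β j * Bp β (j+1) (d+1) := Bp_cons β j (d+1)
    have hBc2 : Bp β j (d+3) = bb β j * Bp β (j+1) (d+2) := Bp_cons β j (d+2)
    have hDr1 : Dd lam (aa α) (bb β) j (d+2)
        = (lam - aa α j) * Dd lam (aa α) (bb β) (j+1) (d+1)
          - (bb β j)^2 * Dd lam (aa α) (bb β) (j+2) d := Dd_rec lam (aa α) (bb β) j d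
    have hDr2 : Dd lam (aa α) (bb β) j (d+3)
        = (lam - aa α j) * Dd lam (aa α) (bb β) (j+1) (d+2)
          - (bb β j)^2 * Dd lam (aa α) (bb β) (j+2) (d+1) := Dd_rec lam (aa α) (bb β) j (d+1)
    ext r s
    fin_cases r <;> fin_cases s <;>
      simp only [Matrix.cons_val', Matrix.cons_val_zero, Matrix.cons_val_one, Matrix.head_cons,
        Matrix.head_fin_const, Matrix.empty_val', Matrix.cons_val_fin_one, Fin.isValue,
        Fin.zero_eta, Fin.mk_one, show d+1+1 = d+2 from rfl, show d+1+2 = d+3 from rfl,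
        show j+1+1 = j+2 from rfl, hb, ha, hBc1, hBc2, hDr1, hDr2] <;>
      field_simp <;> ring

noncomputable def Km (lam : ℝ) (α β : Fin (m+3) → ℝ) : Matrix (Fin (m+3)) (Fin (m+3)) ℝ :=
  Matrix.of fun i j =>
    if i = j then lam - α i
    else if j = i + 1 then -β i
    else if i = j + 1 then -β j
    else 0

lemma fin_succ_iff (i j : Fin (m+3)) :
    j = i + 1 ↔ ((i:ℕ) < m+2 ∧ (j:ℕ) = (i:ℕ)+1) ∨ ((i:ℕ) = m+2 ∧ (j:ℕ) = 0) := by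
  have hi := i.isLt
  have hj := j.isLt
  rw [Fin.ext_iff, Fin.val_add_one]
  split_ifs with h
  · have h' : (i:ℕ) = m+2 := by rw [h]; rfl
    omega
  · have h' : (i:ℕ) ≠ m+2 := fun hh => h (Fin.ext hh)
    omega

lemma Kval (lam : ℝ) (α β : Fin (m+3) → ℝ) (i j : Fin (m+3)) :
    Km lam α β i j =
      if (i:ℕ) = (j:ℕ) then lam - aa α (i:ℕ)
      else if (i:ℕ) < m+2 ∧ (j:ℕ) = (i:ℕ)+1 then -bb β (i:ℕ)
      else if (i:ℕ) = m+2 ∧ (j:ℕ) = 0 then -bb β (m+2)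
      else if (j:ℕ) < m+2 ∧ (i:ℕ) = (j:ℕ)+1 then -bb β (j:ℕ)
      else if (j:ℕ) = m+2 ∧ (i:ℕ) = 0 then -bb β (m+2)
      else 0 := by
  have haa : ∀ x : Fin (m+3), aa α (x:ℕ) = α x := fun x => by rw [aa, Fin.cast_val_eq_self]
  have hbb : ∀ x : Fin (m+3), bb β (x:ℕ) = β x := fun x => by rw [bb, Fin.cast_val_eq_self]
  have hm2 : ∀ x : Fin (m+3), (x:ℕ) = m+2 → bb β (m+2) = β x := by
    intro x hx
    rw [bb]
    congr 1
    apply Fin.ext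
    rw [Fin.val_natCast, Nat.mod_eq_of_lt (show m+2 < m+3 by omega)]
    omega
  rw [Km]
  simp only [Matrix.of_apply]
  simp only [fin_succ_iff]
  simp only [Fin.ext_iff]
  simp only [haa, hbb]
  split_ifs <;> first
    | rfl
    | omega
    | (rename_i h1 h2; exact absurd rfl (by omega))
    | (congr 1; exact (hm2 i (by omega)).symm)
    | (congr 1; exact (hm2 j (by omega)).symm)

lemma sum_two {X : Type*} [AddCommMonoid X] {n : ℕ} (f : Fin (n+2) → X)
    (hf : ∀ j : Fin (n+2), (j:ℕ) ≠ 0 → (j:ℕ) ≠ n+1 → f j = 0) :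
    ∑ j, f j = f 0 + f (Fin.last (n+1)) := by
  have hsub : ({0, Fin.last (n+1)} : Finset (Fin (n+2))) ⊆ Finset.univ := Finset.subset_univ _
  rw [← Finset.sum_subset hsub]
  · rw [Finset.sum_insert (by simp [Fin.ext_iff]), Finset.sum_singleton]
  · intro x _ hx
    simp only [Finset.mem_insert, Finset.mem_singleton, not_or] at hx
    refine hf x (fun h => hx.1 (Fin.ext (by simpa using h))) (fun h => hx.2 (Fin.ext ?_))
    simpa [Fin.val_last] using h

lemma sum_three {X : Type*} [AddCommMonoid X] {n : ℕ} (f : Fin (n+3) → X)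
    (hf : ∀ j : Fin (n+3), (j:ℕ) ≠ 0 → (j:ℕ) ≠ n+1 → (j:ℕ) ≠ n+2 → f j = 0) :
    ∑ j, f j = f 0 + f ⟨n+1, by omega⟩ + f (Fin.last (n+2)) := by
  have hsub : ({0, ⟨n+1, by omega⟩, Fin.last (n+2)} : Finset (Fin (n+3))) ⊆ Finset.univ :=
    Finset.subset_univ _
  rw [← Finset.sum_subset hsub]
  · rw [Finset.sum_insert (by simp [Fin.ext_iff]; try omega),
      Finset.sum_insert (by simp [Fin.ext_iff]; try omega), Finset.sum_singleton, add_assoc]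
  · intro x _ hx
    simp only [Finset.mem_insert, Finset.mem_singleton, not_or] at hx
    refine hf x (fun h => hx.1 (Fin.ext (by simpa using h)))
      (fun h => hx.2.1 (Fin.ext (by simpa using h)))
      (fun h => hx.2.2 (Fin.ext (by simpa [Fin.val_last] using h)))


lemma detN1 (lam : ℝ) (α β : Fin (m+3) → ℝ) :
    ((Km lam α β).submatrix Fin.castSucc (⟨m+1, by omega⟩ : Fin (m+3)).succAbove).det
      = (-1)^(m+1) * (-bb β (m+2)) * ((-1)^(m+1) * Bp β 0 (m+1))
        + (-bb β (m+1)) * Dd lam (aa α) (bb β) 0 (m+1) := by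
  have hcol : ∀ c : Fin (m+2), (((⟨m+1, by omega⟩ : Fin (m+3)).succAbove c : Fin (m+3)) : ℕ)
      = if (c:ℕ) < m+1 then (c:ℕ) else (c:ℕ)+1 := fun c => sAval _ c
  set N1 : Matrix (Fin (m+2)) (Fin (m+2)) ℝ :=
    (Km lam α β).submatrix Fin.castSucc (⟨m+1, by omega⟩ : Fin (m+3)).succAbove with hN1
  rw [Matrix.det_succ_column _ (Fin.last (m+1))]
  rw [sum_two (fun i : Fin (m+2) => (-1:ℝ) ^ ((i:ℕ) + ((Fin.last (m+1)):ℕ)) *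
      N1 i (Fin.last (m+1)) * Matrix.det (N1.submatrix i.succAbove (Fin.last (m+1)).succAbove))
      (fun i h1 h2 => by
        have hz : N1 i (Fin.last (m+1)) = 0 := by
          rw [hN1]
          simp only [Matrix.submatrix_apply, Kval, hcol, Fin.coe_castSucc, Fin.val_last,
      and_true, true_and, and_false, false_and, ite_true, ite_false, and_self]
          have := i.isLt
          split_ifs <;> first | rfl | omega | exact (‹False›).elim
        simp only [hz, mul_zero, zero_mul])]
  beta_reduce
  have hE0 : N1 0 (Fin.last (m+1)) = -bb β (m+2) := by
    rw [hN1]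
    simp only [Matrix.submatrix_apply, Kval, hcol, Fin.coe_castSucc, Fin.val_last, Fin.val_zero,
      and_true, true_and, and_false, false_and, ite_true, ite_false, and_self]
    split_ifs <;> first | rfl | omega | exact (‹False›).elim
  have hEl : N1 (Fin.last (m+1)) (Fin.last (m+1)) = -bb β (m+1) := by
    rw [hN1]
    simp only [Matrix.submatrix_apply, Kval, hcol, Fin.coe_castSucc, Fin.val_last,
      and_true, true_and, and_false, false_and, ite_true, ite_false, and_self]
    split_ifs <;> first | rfl | omega | exact (‹False›).elim
  have htri : (N1.submatrix Fin.succ Fin.castSucc).BlockTriangular id := by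
    intro i j hij
    simp only [id] at hij
    rw [Fin.lt_def] at hij
    have hi := i.isLt
    have hj := j.isLt
    rw [hN1]
    simp only [Matrix.submatrix_apply, Kval, hcol, Fin.coe_castSucc, Fin.val_succ,
      and_true, true_and, and_false, false_and, ite_true, ite_false, and_self]
    split_ifs <;> first | rfl | omega | exact (‹False›).elim
  have hUT : (N1.submatrix Fin.succ Fin.castSucc).det = (-1)^(m+1) * Bp β 0 (m+1) := by
    rw [Matrix.det_of_upperTriangular htri]
    have hdiag : ∀ i : Fin (m+1), (N1.submatrix Fin.succ Fin.castSucc) i i = -bb β (i:ℕ) := by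
      intro i
      have hi := i.isLt
      rw [hN1]
      simp only [Matrix.submatrix_apply, Kval, hcol, Fin.coe_castSucc, Fin.val_succ,
      and_true, true_and, and_false, false_and, ite_true, ite_false, and_self]
      split_ifs <;> first | rfl | omega | exact (‹False›).elim
    rw [Finset.prod_congr rfl (fun i _ => hdiag i)]
    have h1 : ∀ i : Fin (m+1), -bb β (i:ℕ) = (-1) * bb β (i:ℕ) := fun i => by ring
    rw [Finset.prod_congr rfl (fun i _ => h1 i), Finset.prod_mul_distrib,
      Finset.prod_const, Finset.card_univ, Fintype.card_fin]
    congr 1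
    rw [Fin.prod_univ_eq_prod_range (fun n => bb β n) (m+1), Bp]
    exact Finset.prod_congr rfl fun i _ => by rw [Nat.zero_add]
  have hGl : N1.submatrix Fin.castSucc Fin.castSucc = Gmat lam (aa α) (bb β) 0 (m+1) := by
    ext r c
    have hr := r.isLt
    have hc := c.isLt
    rw [hN1]
    simp only [Matrix.submatrix_apply, Kval, hcol, Fin.coe_castSucc, Gmat, Matrix.of_apply, Nat.zero_add,
      and_true, true_and, and_false, false_and, ite_true, ite_false, and_self]
    split_ifs <;> first | rfl | omega | exact (‹False›).elim
  have hsA0 : (0 : Fin (m+2)).succAbove = Fin.succ := Fin.succAbove_zero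
  have hsAl : (Fin.last (m+1)).succAbove = Fin.castSucc := Fin.succAbove_last
  rw [hsA0, hsAl, hUT, hGl, GDd, hE0, hEl, Fin.val_zero, Fin.val_last, Nat.zero_add]
  have hpow : ((-1:ℝ))^((m+1)+(m+1)) = 1 := by
    rw [← two_mul, pow_mul]
    norm_num
  rw [hpow]
  ring



lemma detN2 (lam : ℝ) (α β : Fin (m+3) → ℝ) :
    ((Km lam α β).submatrix Fin.castSucc (0 : Fin (m+3)).succAbove).det
      = (-1)^(m+1) * (-bb β (m+2)) * Dd lam (aa α) (bb β) 1 (m+1)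
        + (-bb β (m+1)) * ((-1)^(m+1) * Bp β 0 (m+1)) := by
  have hcol : (0 : Fin (m+3)).succAbove = Fin.succ := Fin.succAbove_zero
  set N2 : Matrix (Fin (m+2)) (Fin (m+2)) ℝ :=
    (Km lam α β).submatrix Fin.castSucc (0 : Fin (m+3)).succAbove with hN2
  rw [Matrix.det_succ_column _ (Fin.last (m+1))]
  rw [sum_two (fun i : Fin (m+2) => (-1:ℝ) ^ ((i:ℕ) + ((Fin.last (m+1)):ℕ)) *
      N2 i (Fin.last (m+1)) * Matrix.det (N2.submatrix i.succAbove (Fin.last (m+1)).succAbove))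
      (fun i h1 h2 => by
        have hz : N2 i (Fin.last (m+1)) = 0 := by
          rw [hN2, hcol]
          simp only [Matrix.submatrix_apply, Kval, Fin.coe_castSucc, Fin.val_last, Fin.val_succ,
            and_true, true_and, and_false, false_and, ite_true, ite_false, and_self]
          split_ifs <;> first | rfl | omega | exact (‹False›).elim
        simp only [hz, mul_zero, zero_mul])]
  beta_reduce
  have hE0 : N2 0 (Fin.last (m+1)) = -bb β (m+2) := by
    rw [hN2, hcol]
    simp only [Matrix.submatrix_apply, Kval, Fin.coe_castSucc, Fin.val_last, Fin.val_succ,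
      Fin.val_zero, and_true, true_and, and_false, false_and, ite_true, ite_false, and_self]
    split_ifs <;> first | rfl | omega | exact (‹False›).elim
  have hEl : N2 (Fin.last (m+1)) (Fin.last (m+1)) = -bb β (m+1) := by
    rw [hN2, hcol]
    simp only [Matrix.submatrix_apply, Kval, Fin.coe_castSucc, Fin.val_last, Fin.val_succ,
      and_true, true_and, and_false, false_and, ite_true, ite_false, and_self]
    split_ifs <;> first | rfl | omega | exact (‹False›).elim
  have htri : (N2.submatrix Fin.castSucc Fin.castSucc).BlockTriangular OrderDual.toDual := by
    intro i j hij
    simp only [OrderDual.toDual_lt_toDual, Fin.lt_def] at hij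
    have hi := i.isLt
    have hj := j.isLt
    rw [hN2, hcol]
    simp only [Matrix.submatrix_apply, Kval, Fin.coe_castSucc, Fin.val_succ,
      and_true, true_and, and_false, false_and, ite_true, ite_false, and_self]
    split_ifs <;> first | rfl | omega | exact (‹False›).elim
  have hLT : (N2.submatrix Fin.castSucc Fin.castSucc).det = (-1)^(m+1) * Bp β 0 (m+1) := by
    rw [Matrix.det_of_lowerTriangular _ htri]
    have hdiag : ∀ i : Fin (m+1), (N2.submatrix Fin.castSucc Fin.castSucc) i i = -bb β (i:ℕ) := by
      intro i
      have hi := i.isLt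
      rw [hN2, hcol]
      simp only [Matrix.submatrix_apply, Kval, Fin.coe_castSucc, Fin.val_succ,
        and_true, true_and, and_false, false_and, ite_true, ite_false, and_self]
      split_ifs <;> first | rfl | omega | exact (‹False›).elim
    rw [Finset.prod_congr rfl (fun i _ => hdiag i)]
    have h1 : ∀ i : Fin (m+1), -bb β (i:ℕ) = (-1) * bb β (i:ℕ) := fun i => by ring
    rw [Finset.prod_congr rfl (fun i _ => h1 i), Finset.prod_mul_distrib,
      Finset.prod_const, Finset.card_univ, Fintype.card_fin]
    congr 1
    rw [Fin.prod_univ_eq_prod_range (fun n => bb β n) (m+1), Bp]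
    exact Finset.prod_congr rfl fun i _ => by rw [Nat.zero_add]
  have hGl : N2.submatrix Fin.succ Fin.castSucc = Gmat lam (aa α) (bb β) 1 (m+1) := by
    ext r c
    have hr := r.isLt
    have hc := c.isLt
    rw [hN2, hcol]
    simp only [Matrix.submatrix_apply, Kval, Fin.coe_castSucc, Fin.val_succ, Gmat,
      Matrix.of_apply, Nat.one_add,
      and_true, true_and, and_false, false_and, ite_true, ite_false, and_self]
    split_ifs <;> first | rfl | omega | exact (‹False›).elim
  have hsA0 : (0 : Fin (m+2)).succAbove = Fin.succ := Fin.succAbove_zero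
  have hsAl : (Fin.last (m+1)).succAbove = Fin.castSucc := Fin.succAbove_last
  rw [hsA0, hsAl, hLT, hGl, GDd, hE0, hEl, Fin.val_zero, Fin.val_last, Nat.zero_add]
  have hpow : ((-1:ℝ))^((m+1)+(m+1)) = 1 := by
    rw [← two_mul, pow_mul]
    norm_num
  rw [hpow]
  ring


lemma Bp_snoc (β : Fin (m+3) → ℝ) (o n : ℕ) : Bp β o (n+1) = Bp β o n * bb β (o+n) := by
  rw [Bp, Bp, Finset.prod_range_succ]

lemma detKm (lam : ℝ) (α β : Fin (m+3) → ℝ) :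
    (Km lam α β).det =
      (lam - aa α (m+2)) * Dd lam (aa α) (bb β) 0 (m+2)
      - bb β (m+1)^2 * Dd lam (aa α) (bb β) 0 (m+1)
      - bb β (m+2)^2 * Dd lam (aa α) (bb β) 1 (m+1)
      - 2 * Bp β 0 (m+3) := by
  rw [Matrix.det_succ_row (Km lam α β) (Fin.last (m+2))]
  rw [sum_three (fun j : Fin (m+3) => (-1:ℝ) ^ (((Fin.last (m+2)):ℕ) + (j:ℕ)) *
      Km lam α β (Fin.last (m+2)) j *
      ((Km lam α β).submatrix (Fin.last (m+2)).succAbove j.succAbove).det)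
      (fun j h1 h2 h3 => by
        have hz : Km lam α β (Fin.last (m+2)) j = 0 := by
          rw [Kval]
          simp only [Fin.val_last, and_true, true_and, and_false, false_and, ite_true,
            ite_false, and_self]
          split_ifs <;> first | rfl | omega | exact (‹False›).elim
        simp only [hz, mul_zero, zero_mul])]
  beta_reduce
  have hK0 : Km lam α β (Fin.last (m+2)) 0 = -bb β (m+2) := by
    rw [Kval]
    simp only [Fin.val_last, Fin.val_zero, and_true, true_and, and_false, false_and,
      ite_true, ite_false, and_self]
    split_ifs <;> first | rfl | omega | exact (‹False›).elim
  have hK1 : Km lam α β (Fin.last (m+2)) ⟨m+1, by omega⟩ = -bb β (m+1) := by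
    rw [Kval]
    simp only [Fin.val_last, and_true, true_and, and_false, false_and,
      ite_true, ite_false, and_self]
    split_ifs <;> first | rfl | omega | exact (‹False›).elim
  have hK2 : Km lam α β (Fin.last (m+2)) (Fin.last (m+2)) = lam - aa α (m+2) := by
    rw [Kval]
    simp only [Fin.val_last, and_true, true_and, and_false, false_and,
      ite_true, ite_false, and_self]
    try split_ifs <;> first | rfl | omega | exact (‹False›).elim
    try rfl
  have hG2 : (Km lam α β).submatrix Fin.castSucc Fin.castSucc
      = Gmat lam (aa α) (bb β) 0 (m+2) := by
    ext r c
    have hr := r.isLt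
    have hc := c.isLt
    simp only [Matrix.submatrix_apply, Kval, Fin.coe_castSucc, Gmat, Matrix.of_apply,
      Nat.zero_add, and_true, true_and, and_false, false_and, ite_true, ite_false, and_self]
    split_ifs <;> first | rfl | omega | exact (‹False›).elim
  have hrow : (Fin.last (m+2)).succAbove = Fin.castSucc := Fin.succAbove_last
  rw [hrow, hK0, hK1, hK2, detN1, detN2, hG2, GDd, Fin.val_last, Fin.val_zero, Nat.add_zero]
  have hBp : Bp β 0 (m+3) = Bp β 0 (m+1) * bb β (m+1) * bb β (m+2) := by
    rw [Bp_snoc β 0 (m+2), Bp_snoc β 0 (m+1), Nat.zero_add, Nat.zero_add]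
  rw [hBp]
  have hv1 : ((⟨m+1, by omega⟩ : Fin (m+3)) : ℕ) = m+1 := rfl
  rw [hv1]
  have hp2 : ((-1:ℝ))^(m+2) = (-1)^(m+1) * (-1) := pow_succ (-1) (m+1)
  have hpa : ((-1:ℝ))^((m+2)+(m+1)) = ((-1)^(m+1) * (-1)) * (-1)^(m+1) := by
    rw [pow_add, hp2]
  have hpb : ((-1:ℝ))^((m+2)+(m+2)) = ((-1)^(m+1) * (-1)) * ((-1)^(m+1) * (-1)) := by
    rw [pow_add, hp2]
  rw [hpa, hpb, hp2]
  rcases Nat.even_or_odd (m+1) with h | h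
  · rw [Even.neg_one_pow h]; ring
  · rw [Odd.neg_one_pow h]; ring


lemma prod_beta (β : Fin (m+3) → ℝ) : ∏ i, β i = Bp β 0 (m+3) := by
  have h1 : ∏ i, β i = ∏ i : Fin (m+3), bb β (i:ℕ) :=
    Finset.prod_congr rfl fun i _ => by rw [bb, Fin.cast_val_eq_self]
  rw [h1, Fin.prod_univ_eq_prod_range (fun n => bb β n) (m+3), Bp]
  exact Finset.prod_congr rfl fun i _ => by rw [Nat.zero_add]

end hill

/-- The Hill formula for a `q × q` periodic Jacobi matrix (`q = m + 3 ≥ 3`) with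
negative off-diagonal entries: `det(J - λI) = (-1)^q β₀⋯β_{q-1} (tr M(λ) - 2)`,
where `M(λ)` is the product of the transfer matrices
`[[0,1],[-β_{i-1}/β_i, (λ-α_i)/β_i]]` (indices mod `q`, last factor leftmost). -/
theorem hill_formula (m : ℕ) (α β : Fin (m + 3) → ℝ) (hβ : ∀ i, β i < 0)
    (J : Matrix (Fin (m + 3)) (Fin (m + 3)) ℝ)
    (hJ : J = Matrix.of fun i j =>
      if i = j then α i
      else if j = i + 1 then β i
      else if i = j + 1 then β j
      else 0)
    (M : ℝ → Matrix (Fin 2) (Fin 2) ℝ)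
    (hM : ∀ lam : ℝ, M lam =
      ((List.ofFn fun i : Fin (m + 3) =>
        (!![0, 1; -β (i - 1) / β i, (lam - α i) / β i] :
          Matrix (Fin 2) (Fin 2) ℝ)).reverse).prod) :
    ∀ lam : ℝ,
      (J - lam • (1 : Matrix (Fin (m + 3)) (Fin (m + 3)) ℝ)).det =
        (-1) ^ (m + 3) * (∏ i, β i) * ((M lam).trace - 2) := by
  intro lam
  have hβ' : ∀ i, β i ≠ 0 := fun i => ne_of_lt (hβ i)
  have hJK : J - lam • (1 : Matrix (Fin (m+3)) (Fin (m+3)) ℝ) = -(Km lam α β) := by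
    rw [hJ, Km]
    ext i j
    simp only [Matrix.sub_apply, Matrix.smul_apply, Matrix.one_apply, Matrix.of_apply,
      Matrix.neg_apply, smul_eq_mul]
    split_ifs <;> ring
  rw [hJK, Matrix.det_neg, Fintype.card_fin, detKm]
  have hMS : M lam = Sj lam α β 0 := by
    rw [hM, Sj, List.drop_zero]
    rfl
  have htr := transfer lam α β hβ' (m+1) le_rfl
  rw [show m+1-(m+1) = 0 from by omega] at htr
  rw [hMS, htr, Matrix.trace_fin_two_of]
  open Fin.NatCast in
  have hb2 : β ((↑(0:ℕ) : Fin (m+3)) - 1) = bb β (m+2) := by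
    rw [bb]
    congr 1
  rw [hb2]
  have hDe : Dd lam (aa α) (bb β) 0 (m+1+2)
      = (lam - aa α (m+2)) * Dd lam (aa α) (bb β) 0 (m+2)
        - bb β (m+1)^2 * Dd lam (aa α) (bb β) 0 (m+1) := by
    have := Dd_rec_end lam (aa α) (bb β) (m+1) 0
    rwa [show 0+(m+1)+1 = m+2 from by omega, show 0+(m+1) = m+1 from by omega,
      show m+1+1 = m+2 from rfl] at this
  rw [hDe, prod_beta β]
  rw [show m+1+1 = m+2 from rfl, show m+1+2 = m+3 from rfl, show 0+1 = 1 from rfl]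
  have hBp3 : Bp β 0 (m+3) = Bp β 0 (m+2) * bb β (m+2) := by
    rw [Bp_snoc β 0 (m+2), Nat.zero_add]
  have hne2 : Bp β 0 (m+2) ≠ 0 := Bp_ne β hβ' 0 (m+2)
  have hne3 : Bp β 0 (m+3) ≠ 0 := Bp_ne β hβ' 0 (m+3)
  have hbne : bb β (m+2) ≠ 0 := hβ' _
  rw [hBp3]
  field_simp
  ring
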